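/- (a) Let K ∈ M₂(ℂ) with det K ≠ 0 and Φ := fromBlocks K 0 0 (K‡). Then for every Hermitian v ∈ M₂(ℂ) there exists a Hermitian w with Φ·γ(v) = γ(w)·Φ if and only if det K is real. (b) Let P ∈ M₂(ℂ) with det P ≠ 0 and Φ := fromBlocks 0 P (P‡) 0. Then for every Hermitian v ∈ M₂(ℂ) there exists a Hermitian w with Φ·γ(v) = γ(w)·Φ if and only if det P is real. (Thus the even and odd parts of the Clifford group are exactly the invertible block matrices of these two forms with real nonzero determinant of the block.) -/

import Mathlib

open Matrix

/-- The space of 2×2 complex matrices. -/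
abbrev M2 : Type := Matrix (Fin 2) (Fin 2) ℂ

/-- The space of 4×4 complex matrices, indexed by blocks (endomorphisms of 4-spinor space). -/
abbrev M4 : Type := Matrix (Fin 2 ⊕ Fin 2) (Fin 2 ⊕ Fin 2) ℂ

/-- The Dirac map in two-spinor (Weyl) form: `γ(y) = fromBlocks 0 (√2·y) (√2·adj y) 0`. -/
noncomputable def diracGamma (y : M2) : M4 :=
  fromBlocks 0 ((Real.sqrt 2 : ℂ) • y) ((Real.sqrt 2 : ℂ) • y.adjugate) 0

/-- The ε-adjoint `X‡ := adj(Xᴴ)`. -/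
def ddag (X : M2) : M2 := (Xᴴ).adjugate

private lemma sqrt2C_ne : ((Real.sqrt 2 : ℝ) : ℂ) ≠ 0 := by
  have : (0:ℝ) < Real.sqrt 2 := Real.sqrt_pos.mpr (by norm_num)
  exact_mod_cast this.ne'

private lemma forward_aux (K w : M2) (hd : K.det ≠ 0) (hw : w.IsHermitian)
    (h : K = w * (Kᴴ).adjugate) : (K.det).im = 0 := by
  have h2 : K * Kᴴ = (starRingEnd ℂ) K.det • w := by
    calc K * Kᴴ = w * ((Kᴴ).adjugate * Kᴴ) := by rw [← Matrix.mul_assoc, ← h]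
    _ = w * ((Kᴴ).det • 1) := by rw [Matrix.adjugate_mul]
    _ = (starRingEnd ℂ) K.det • w := by
        rw [Matrix.det_conjTranspose, Matrix.mul_smul, Matrix.mul_one]; rfl
  have h3 : K * Kᴴ = K.det • w := by
    have h4 := congrArg conjTranspose h2
    rwa [conjTranspose_mul, conjTranspose_conjTranspose, conjTranspose_smul, hw.eq,
      Complex.star_def, Complex.conj_conj] at h4
  have hw0 : w ≠ 0 := by
    intro h0
    apply hd
    have h5 : K * Kᴴ = 0 := by rw [h2, h0, smul_zero]
    have h6 := congrArg Matrix.det h5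
    rw [Matrix.det_mul, Matrix.det_conjTranspose, Matrix.det_zero (n := Fin 2)] at h6
    exact (mul_eq_zero.mp h6).elim id (fun h => by
      simpa using congrArg (starRingEnd ℂ) h)
  obtain ⟨i, j, hij⟩ : ∃ i j, w i j ≠ 0 := by
    by_contra hc
    push_neg at hc
    exact hw0 (Matrix.ext fun i j => hc i j)
  have h7 : (starRingEnd ℂ) K.det * w i j = K.det * w i j := by
    have e := (h2.symm.trans h3)
    have := congrFun (congrFun e i) j
    simpa [Matrix.smul_apply] using this
  exact Complex.conj_eq_iff_im.mp (mul_right_cancel₀ hij h7)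

private lemma backHerm (K X : M2) (hds : star K.det = K.det) (hX : X.IsHermitian) :
    (K.det⁻¹ • (K * X * Kᴴ)).IsHermitian := by
  have h1 : (K * X * Kᴴ).IsHermitian := Matrix.isHermitian_mul_mul_conjTranspose K hX
  show _ᴴ = _
  rw [conjTranspose_smul, h1.eq, star_inv₀, hds]

private lemma back1 (K X : M2) (hd : K.det ≠ 0) (hds : star K.det = K.det) :
    (K.det⁻¹ • (K * X * Kᴴ)) * ddag K = K * X := by
  rw [ddag, Matrix.smul_mul, Matrix.mul_assoc, Matrix.mul_adjugate, Matrix.det_conjTranspose,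
    hds, Matrix.mul_smul, Matrix.mul_one, smul_smul, inv_mul_cancel₀ hd, one_smul]

private lemma back2 (K X : M2) (hd : K.det ≠ 0) :
    (K.det⁻¹ • (K * X * Kᴴ)).adjugate * K = (Kᴴ).adjugate * X.adjugate := by
  rw [Matrix.adjugate_smul]
  have hcard : Fintype.card (Fin 2) - 1 = 1 := by simp
  rw [hcard, pow_one]
  rw [Matrix.adjugate_mul_distrib, Matrix.adjugate_mul_distrib, Matrix.smul_mul,
    Matrix.mul_assoc, Matrix.mul_assoc, Matrix.adjugate_mul, Matrix.mul_smul, Matrix.mul_one,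
    Matrix.mul_smul, smul_smul, inv_mul_cancel₀ hd, one_smul]

private lemma mulA (K v : M2) : fromBlocks K 0 0 (ddag K) * diracGamma v
    = fromBlocks 0 (((Real.sqrt 2 : ℝ) : ℂ) • (K * v))
        (((Real.sqrt 2 : ℝ) : ℂ) • (ddag K * v.adjugate)) 0 := by
  simp [diracGamma, Matrix.fromBlocks_multiply, Matrix.mul_smul]

private lemma mulA' (w K : M2) : diracGamma w * fromBlocks K 0 0 (ddag K)
    = fromBlocks 0 (((Real.sqrt 2 : ℝ) : ℂ) • (w * ddag K))
        (((Real.sqrt 2 : ℝ) : ℂ) • (w.adjugate * K)) 0 := by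
  simp [diracGamma, Matrix.fromBlocks_multiply, Matrix.smul_mul]

private lemma mulB (P v : M2) : fromBlocks 0 P (ddag P) 0 * diracGamma v
    = fromBlocks (((Real.sqrt 2 : ℝ) : ℂ) • (P * v.adjugate)) 0 0
        (((Real.sqrt 2 : ℝ) : ℂ) • (ddag P * v)) := by
  simp [diracGamma, Matrix.fromBlocks_multiply, Matrix.mul_smul]

private lemma mulB' (w P : M2) : diracGamma w * fromBlocks 0 P (ddag P) 0
    = fromBlocks (((Real.sqrt 2 : ℝ) : ℂ) • (w * ddag P)) 0 0
        (((Real.sqrt 2 : ℝ) : ℂ) • (w.adjugate * P)) := by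
  simp [diracGamma, Matrix.fromBlocks_multiply, Matrix.smul_mul]

/-- Characterization of the even and odd parts of the Clifford group:
(a) for `K` with `det K ≠ 0`, the block-diagonal `Φ = fromBlocks K 0 0 (K‡)`
has adjoint action stabilizing `γ(H)` iff `det K` is real;
(b) for `P` with `det P ≠ 0`, the block-antidiagonal `Φ = fromBlocks 0 P (P‡) 0`
has adjoint action stabilizing `γ(H)` iff `det P` is real. -/
theorem clifford_group_even_odd_characterization :
    (∀ K : M2, K.det ≠ 0 →
      ((∀ v : M2, v.IsHermitian → ∃ w : M2, w.IsHermitian ∧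
          fromBlocks K 0 0 (ddag K) * diracGamma v
            = diracGamma w * fromBlocks K 0 0 (ddag K))
        ↔ (K.det).im = 0)) ∧
    (∀ P : M2, P.det ≠ 0 →
      ((∀ v : M2, v.IsHermitian → ∃ w : M2, w.IsHermitian ∧
          fromBlocks 0 P (ddag P) 0 * diracGamma v
            = diracGamma w * fromBlocks 0 P (ddag P) 0)
        ↔ (P.det).im = 0)) := by
  constructor
  · intro K hd
    constructor
    · intro h
      obtain ⟨w, hw, heq⟩ := h 1 Matrix.isHermitian_one
      rw [mulA, mulA'] at heq
      have h12 := (Matrix.fromBlocks_inj.mp heq).2.1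
      have hKw : K = w * ddag K := by
        have := smul_right_injective M2 sqrt2C_ne h12
        rwa [Matrix.mul_one] at this
      exact forward_aux K w hd hw hKw
    · intro him v hv
      have hds : star K.det = K.det := Complex.conj_eq_iff_im.mpr him
      refine ⟨K.det⁻¹ • (K * v * Kᴴ), backHerm K v hds hv, ?_⟩
      rw [mulA, mulA', back1 K v hd hds, back2 K v hd, ddag]
  · intro P hd
    constructor
    · intro h
      obtain ⟨w, hw, heq⟩ := h 1 Matrix.isHermitian_one
      rw [mulB, mulB'] at heq
      have h11 := (Matrix.fromBlocks_inj.mp heq).1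
      have hPw : P = w * ddag P := by
        have := smul_right_injective M2 sqrt2C_ne h11
        rwa [Matrix.adjugate_one, Matrix.mul_one] at this
      exact forward_aux P w hd hw hPw
    · intro him v hv
      have hds : star P.det = P.det := Complex.conj_eq_iff_im.mpr him
      refine ⟨P.det⁻¹ • (P * v.adjugate * Pᴴ), backHerm P v.adjugate hds hv.adjugate, ?_⟩
      rw [mulB, mulB', back1 P v.adjugate hd hds, back2 P v.adjugate hd, ddag,
        Matrix.adjugate_adjugate v (by simp)]
      simp
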